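/- Let u ∈ ℬ(ℝⁿ) ∩ C²(ℝⁿ) be convex. Then for all x = (x₁,…,xₙ) ∈ (0,∞)ⁿ, (u[e])*(x) + (u*[e])*(x) = Σ_{j=1}^n (x_j·ln x_j − x_j). -/

import Mathlib

open Filter
open scoped BigOperators Topology

noncomputable section

abbrev En (n : ℕ) := EuclideanSpace ℝ (Fin n)

/-- The closed positive orthant `[0,∞)ⁿ`. -/
def orthant (n : ℕ) : Set (En n) := {x | ∀ j, 0 ≤ x j}

/-- `g[e]`, the coordinatewise exponential substitution `g[e](x) = g(e^{x₁},…,e^{xₙ})`. -/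
def expComp {n : ℕ} (g : En n → ℝ) : En n → ℝ := fun x => g (WithLp.toLp 2 (fun j => Real.exp (x j)))

/-- The Young–Fenchel conjugate `g*(x) = sup_y (⟨x,y⟩ - g(y))`. -/
def starC {n : ℕ} (g : En n → ℝ) (x : En n) : ℝ := ⨆ y : En n, (∑ j, x j * y j - g y)

/-- `g ∈ ℬ(ℝⁿ)`: `g` is continuous on `ℝⁿ` and `g(x)/‖x‖ → +∞` as `x → ∞`. -/
def memBR {n : ℕ} (g : En n → ℝ) : Prop :=
  Continuous g ∧ Tendsto (fun x : En n => g x / ‖x‖) (cocompact (En n)) atTop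

section Aux

open Set

def Phi {n : ℕ} (y : En n) : En n := WithLp.toLp 2 (fun i => Real.exp (y i))

lemma Phi_cont {n : ℕ} : Continuous (Phi (n := n)) := by unfold Phi; fun_prop

lemma aux_coord {n : ℕ} (v : En n) (i : Fin n) : |v i| ≤ ‖v‖ := by
  rw [EuclideanSpace.norm_eq, ← Real.sqrt_sq_eq_abs]
  apply Real.sqrt_le_sqrt
  calc (v i)^2 = ‖v i‖^2 := by rw [Real.norm_eq_abs, sq_abs]
    _ ≤ ∑ j, ‖v j‖^2 := Finset.single_le_sum (fun j _ => sq_nonneg ‖v j‖) (Finset.mem_univ i)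

lemma aux_l2 {a : ℝ} (ha : 0 < a) (t : ℝ) : a * t - Real.exp t ≤ a * Real.log a - a := by
  have h := Real.add_one_le_exp (t - Real.log a)
  have h2 : Real.exp (t - Real.log a) = Real.exp t / a := by
    rw [Real.exp_sub, Real.exp_log ha]
  rw [h2] at h
  have := Real.exp_pos t
  have h3 : (t - Real.log a + 1) * a ≤ Real.exp t := (le_div_iff₀ ha).mp h
  nlinarith

lemma aux_quad (t : ℝ) (ht : 0 ≤ t) : t^2/4 ≤ Real.exp t := by
  have h := Real.add_one_le_exp (t/2)
  have h2 : Real.exp (t/2) * Real.exp (t/2) = Real.exp t := by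
    rw [← Real.exp_add]; ring_nf
  nlinarith [Real.exp_pos (t/2)]

lemma aux_term_lb {a : ℝ} (ha : 0 < a) (t : ℝ) : -a^2 ≤ Real.exp t - a * t := by
  rcases le_or_gt t 0 with h | h
  · nlinarith [Real.exp_pos t, mul_nonneg ha.le (neg_nonneg.2 h)]
  · have := aux_quad t h.le
    nlinarith [sq_nonneg (t/2 - a)]

lemma aux_lower {n : ℕ} {u : En n → ℝ} (hu : memBR u) (C : ℝ) :
    ∃ D : ℝ, ∀ v, C * ‖v‖ - D ≤ u v := by
  have h := (tendsto_atTop.1 hu.2) C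
  rw [Filter.eventually_iff, Filter.mem_cocompact] at h
  obtain ⟨K, hK, hKs⟩ := h
  obtain ⟨r, hr⟩ := hK.isBounded.subset_closedBall 0
  set R : ℝ := max r 0 with hR
  have hKR : K ⊆ Metric.closedBall 0 R :=
    hr.trans (Metric.closedBall_subset_closedBall (le_max_left _ _))
  obtain ⟨v₀, _, hv₀⟩ := (isCompact_closedBall (0 : En n) R).exists_isMinOn
    ⟨0, Metric.mem_closedBall_self (le_max_right _ _)⟩ hu.1.continuousOn
  set m := u v₀
  refine ⟨|C| * R + |m|, fun v => ?_⟩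
  rcases le_or_gt ‖v‖ R with hv | hv
  · have h1 : m ≤ u v := hv₀ (by simpa [Metric.mem_closedBall, dist_zero_right] using hv)
    have h2 : C * ‖v‖ ≤ |C| * R := by
      calc C * ‖v‖ ≤ |C| * ‖v‖ := mul_le_mul_of_nonneg_right (le_abs_self C) (norm_nonneg v)
        _ ≤ |C| * R := mul_le_mul_of_nonneg_left hv (abs_nonneg C)
    nlinarith [abs_nonneg m, neg_abs_le m]
  · have hvK : v ∉ K := fun hvk => by
      have := hKR hvk
      simp [Metric.mem_closedBall, dist_zero_right] at this
      linarith
    have h1 : C ≤ u v / ‖v‖ := hKs hvK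
    have hvpos : 0 < ‖v‖ := lt_of_le_of_lt (le_max_right r 0) hv
    have h2 : C * ‖v‖ ≤ u v := by
      rw [le_div_iff₀ hvpos] at h1; linarith
    have : 0 ≤ |C| * R + |m| := by positivity
    linarith

lemma aux_bddAbove {n : ℕ} {u : En n → ℝ} (hu : memBR u) (w : En n) :
    BddAbove (Set.range fun v : En n => ∑ j, w j * v j - u v) := by
  obtain ⟨D, hD⟩ := aux_lower hu (‖w‖ + 1)
  refine ⟨D, ?_⟩
  rintro a ⟨v, rfl⟩
  have h1 : ∑ j, w j * v j ≤ ‖w‖ * ‖v‖ := by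
    have h := real_inner_le_norm w v
    simpa [PiLp.inner_apply, RCLike.inner_apply, conj_trivial, mul_comm] using h
  have h2 := hD v
  have := norm_nonneg v
  simp only
  nlinarith

lemma aux_basis {n : ℕ} (w : En n) : w = ∑ j, w j • (EuclideanSpace.single j (1:ℝ)) := by
  ext i
  rw [WithLp.ofLp_sum, Finset.sum_apply]
  simp [EuclideanSpace.single_apply, Finset.sum_ite_eq]

lemma aux_curve {n : ℕ} (y₀ : En n) (j : Fin n) :
    HasDerivAt (fun t : ℝ => Phi (y₀ + t • EuclideanSpace.single j (1:ℝ)))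
      (Real.exp (y₀ j) • EuclideanSpace.single j (1:ℝ)) 0 := by
  set L := (PiLp.continuousLinearEquiv 2 ℝ (fun _ : Fin n => ℝ)).symm
  have hg0 : HasDerivAt
      (fun t : ℝ => (fun i => Real.exp (y₀ i + t * (EuclideanSpace.single j (1:ℝ)) i) : Fin n → ℝ))
      (fun i => Real.exp (y₀ j) * (EuclideanSpace.single j (1:ℝ)) i) 0 := by
    apply hasDerivAt_pi.2
    intro i
    have h1 : HasDerivAt (fun t : ℝ => y₀ i + t * (EuclideanSpace.single j (1:ℝ)) i)
        ((EuclideanSpace.single j (1:ℝ)) i) 0 :=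
      (hasDerivAt_mul_const _).const_add _
    have h2 := h1.exp
    simp only [zero_mul, add_zero] at h2
    rcases eq_or_ne i j with rfl | hij
    · simpa [EuclideanSpace.single_apply] using h2
    · simpa [EuclideanSpace.single_apply, hij] using h2
  exact L.hasFDerivAt.comp_hasDerivAt 0 hg0

lemma aux_tangent {n : ℕ} {u : En n → ℝ} (hconv : ConvexOn ℝ Set.univ u)
    {p : En n} (hd : DifferentiableAt ℝ u p) (w : En n) :
    u p + fderiv ℝ u p (w - p) ≤ u w := by
  set d : ℝ := fderiv ℝ u p (w - p) with hdd
  set φ : ℝ → ℝ := fun t => u (p + t • (w - p)) with hφ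
  have hcurve : HasDerivAt (fun t : ℝ => p + t • (w - p)) (w - p) 0 := by
    simpa using ((hasDerivAt_id (0:ℝ)).smul_const (w - p)).const_add p
  have hφd : HasDerivAt φ d 0 := by
    have hdp : HasFDerivAt u (fderiv ℝ u p) (p + (0:ℝ) • (w - p)) := by
      simpa using hd.hasFDerivAt
    exact hdp.comp_hasDerivAt 0 hcurve
  have hslope : Tendsto (slope φ 0) (𝓝[>] (0:ℝ)) (𝓝 d) :=
    (hasDerivAt_iff_tendsto_slope.1 hφd).mono_left
      (nhdsWithin_mono 0 (fun t ht => ne_of_gt ht))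
  have hev : ∀ᶠ t in 𝓝[>] (0:ℝ), slope φ 0 t ≤ u w - u p := by
    filter_upwards [Ioo_mem_nhdsGT_of_mem (by norm_num : (0:ℝ) ∈ Ico (0:ℝ) 1)] with t ht
    have ht0 : 0 < t := ht.1
    have ht1 : t < 1 := ht.2
    have hcvx := hconv.2 (mem_univ p) (mem_univ w) (by linarith : (0:ℝ) ≤ 1 - t)
      (le_of_lt ht0) (by ring : (1 - t) + t = 1)
    have hpt : (1 - t) • p + t • w = p + t • (w - p) := by module
    rw [hpt, smul_eq_mul, smul_eq_mul] at hcvx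
    have h1 : φ t - φ 0 ≤ t * (u w - u p) := by
      simp only [hφ, zero_smul, add_zero]
      nlinarith
    rw [slope_def_field, sub_zero, div_le_iff₀ ht0]
    linarith
  have := le_of_tendsto hslope hev
  linarith

lemma aux_min {n : ℕ} {u : En n → ℝ} (hu : memBR u) (x : En n) (hx : ∀ j, 0 < x j) :
    ∃ y₀ : En n, ∀ y : En n,
      u (Phi y₀) - ∑ j, x j * y₀ j ≤ u (Phi y) - ∑ j, x j * y j := by
  set f : En n → ℝ := fun y => u (Phi y) - ∑ j, x j * y j with hf
  have hfc : Continuous f := by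
    apply Continuous.sub (hu.1.comp Phi_cont)
    fun_prop
  obtain ⟨D, hD⟩ := aux_lower hu n
  have key : ∀ y : En n, (∑ j, (Real.exp (y j) - x j * y j)) - D ≤ f y := by
    intro y
    have h1 : ∀ j, Real.exp (y j) ≤ ‖Phi y‖ := by
      intro j
      have := aux_coord (Phi y) j
      have hp : Phi y j = Real.exp (y j) := rfl
      rw [hp, abs_of_pos (Real.exp_pos _)] at this
      exact this
    have h2 : ∑ j, Real.exp (y j) ≤ (n : ℝ) * ‖Phi y‖ := by
      calc ∑ j, Real.exp (y j) ≤ ∑ _j : Fin n, ‖Phi y‖ :=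
            Finset.sum_le_sum (fun j _ => h1 j)
        _ = (n : ℝ) * ‖Phi y‖ := by simp [Finset.sum_const, mul_comm]
    have h3 := hD (Phi y)
    simp only [hf, Finset.sum_sub_distrib]
    linarith
  set M₀ : ℝ := f 0 + D + ∑ k, (x k)^2 with hM₀
  set M₁ : ℝ := max M₀ 0 with hM₁
  have hM₁0 : 0 ≤ M₁ := le_max_right _ _
  set T : Fin n → ℝ := fun j => max (M₁ / x j) (max 1 (4*(M₁ + x j))) with hT
  have hT1 : ∀ j, 1 ≤ T j := fun j => le_trans (le_max_left 1 _) (le_max_right _ _)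
  have hsub : ∀ y : En n, f y ≤ f 0 → ∀ j, |y j| ≤ T j := by
    intro y hy j
    have hterm : Real.exp (y j) - x j * y j ≤ M₀ := by
      have hg : ∀ k (_ : k ∈ Finset.univ), (0:ℝ) ≤ Real.exp (y k) - x k * y k + (x k)^2 := by
        intro k _
        have := aux_term_lb (hx k) (y k)
        linarith
      have hs := Finset.single_le_sum hg (Finset.mem_univ j)
      have hsum : ∑ k, (Real.exp (y k) - x k * y k + (x k)^2)
          = (∑ k, (Real.exp (y k) - x k * y k)) + ∑ k, (x k)^2 := by
        rw [Finset.sum_add_distrib]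
      have h4 := key y
      have h5 : (0:ℝ) ≤ (x j)^2 := sq_nonneg _
      rw [hsum] at hs
      simp only [hM₀]
      linarith
    have hterm1 : Real.exp (y j) - x j * y j ≤ M₁ := le_trans hterm (le_max_left _ _)
    rcases le_or_gt (y j) 0 with h | h
    · have h1 : x j * (-(y j)) ≤ M₁ := by
        have := Real.exp_pos (y j); nlinarith
      have h2 : -(y j) ≤ M₁ / x j := by
        rw [le_div_iff₀ (hx j)]; linarith [mul_comm (x j) (-(y j))]
      rw [abs_of_nonpos h]
      exact le_trans h2 (le_max_left _ _)
    · rw [abs_of_pos h]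
      rcases le_or_gt (y j) 1 with h1 | h1
      · exact le_trans h1 (hT1 j)
      · have hq := aux_quad (y j) h.le
        have : y j ≤ 4*(M₁ + x j) := by nlinarith
        exact le_trans this (le_trans (le_max_right 1 _) (le_max_right _ _))
  set R : ℝ := Real.sqrt (∑ j, (T j)^2) with hR
  have hball : ∀ y : En n, f y ≤ f 0 → y ∈ Metric.closedBall (0 : En n) R := by
    intro y hy
    rw [Metric.mem_closedBall, dist_zero_right, EuclideanSpace.norm_eq]
    apply Real.sqrt_le_sqrt
    apply Finset.sum_le_sum
    intro j _
    have := hsub y hy j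
    have h1 : (1:ℝ) ≤ T j := hT1 j
    rw [Real.norm_eq_abs]
    nlinarith [abs_nonneg (y j)]
  set S : Set (En n) := {y | f y ≤ f 0} with hS
  have hSc : IsClosed S := isClosed_le hfc continuous_const
  have hScomp : IsCompact S := (isCompact_closedBall (0 : En n) R).of_isClosed_subset hSc
    (fun y hy => hball y hy)
  obtain ⟨y₀, hy₀S, hy₀⟩ := hScomp.exists_isMinOn ⟨0, le_refl (f 0)⟩ hfc.continuousOn
  refine ⟨y₀, fun y => ?_⟩
  rcases le_or_gt (f y) (f 0) with h | h
  · exact hy₀ h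
  · exact le_trans (hy₀ hy₀S) (le_trans hy₀S h.le)

end Aux

theorem stmt13 (n : ℕ) (u : En n → ℝ) (hu : memBR u)
    (hC2 : ContDiff ℝ 2 u) (hconv : ConvexOn ℝ Set.univ u) :
    ∀ x : En n, (∀ j, 0 < x j) →
      starC (expComp u) x + starC (expComp (starC u)) x =
        ∑ j, (x j * Real.log (x j) - x j) := by
  intro x hx
  obtain ⟨y₀, hy₀⟩ := aux_min hu x hx
  set p : En n := Phi y₀ with hp
  have hppos : ∀ j, 0 < p j := fun j => Real.exp_pos _
  have hdiff : DifferentiableAt ℝ u p :=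
    (hC2.differentiable (by norm_num)).differentiableAt
  set D : En n →L[ℝ] ℝ := fderiv ℝ u p with hD
  set A : ℝ := ∑ j, x j * y₀ j - u p with hA
  -- gradient condition: p j * D (single j) = x j
  have hgrad : ∀ j, D (EuclideanSpace.single j (1:ℝ)) * p j = x j := by
    intro j
    set sgl : En n := EuclideanSpace.single j (1:ℝ) with hsgl
    have hpart1 : HasDerivAt (fun t : ℝ => u (Phi (y₀ + t • sgl))) (D (Real.exp (y₀ j) • sgl)) 0 := by
      have hdp : HasFDerivAt u D (Phi (y₀ + (0:ℝ) • sgl)) := by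
        have : Phi (y₀ + (0:ℝ) • sgl) = p := by rw [zero_smul, add_zero]
        rw [this]
        exact hdiff.hasFDerivAt
      exact hdp.comp_hasDerivAt 0 (aux_curve y₀ j)
    have hpart2 : HasDerivAt (fun t : ℝ => ∑ i, x i * (y₀ + t • sgl) i) (x j) 0 := by
      have h1 : HasDerivAt (fun t : ℝ => ∑ i, x i * (y₀ i + t * sgl i)) (∑ i, x i * sgl i) 0 := by
        apply HasDerivAt.fun_sum
        intro i _
        exact ((hasDerivAt_mul_const (sgl i)).const_add (y₀ i)).const_mul (x i)
      have h2 : ∑ i, x i * sgl i = x j := by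
        simp [hsgl, EuclideanSpace.single_apply, Finset.sum_ite_eq]
      rw [h2] at h1
      exact h1
    have hF : HasDerivAt (fun t : ℝ => u (Phi (y₀ + t • sgl)) - ∑ i, x i * (y₀ + t • sgl) i)
        (D (Real.exp (y₀ j) • sgl) - x j) 0 := hpart1.sub hpart2
    have hmin : IsLocalMin (fun t : ℝ => u (Phi (y₀ + t • sgl)) - ∑ i, x i * (y₀ + t • sgl) i) 0 := by
      apply Filter.Eventually.of_forall
      intro t
      have := hy₀ (y₀ + t • sgl)
      simpa [zero_smul, add_zero] using this
    have hz := hmin.deriv_eq_zero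
    rw [hF.deriv] at hz
    have : D (Real.exp (y₀ j) • sgl) = Real.exp (y₀ j) * D sgl := by
      rw [map_smul]; simp [smul_eq_mul]
    rw [this] at hz
    have hpj : p j = Real.exp (y₀ j) := rfl
    rw [hpj]
    linarith
  set q : En n := WithLp.toLp 2 fun j => D (EuclideanSpace.single j (1:ℝ)) with hq
  have hqp : ∀ j, q j * p j = x j := hgrad
  have hqpos : ∀ j, 0 < q j := by
    intro j
    have := hqp j
    have := hppos j
    have := hx j
    nlinarith
  -- expand D on arbitrary vectors
  have hDev : ∀ w : En n, D w = ∑ j, w j * q j := by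
    intro w
    conv_lhs => rw [aux_basis w]
    rw [map_sum]
    apply Finset.sum_congr rfl
    intro j _
    rw [map_smul, smul_eq_mul, hq]
  -- tangent inequality
  have htan : ∀ w : En n, ∑ j, q j * w j - u w ≤ ∑ j, x j - u p := by
    intro w
    have h1 := aux_tangent hconv hdiff w
    have h2 : D (w - p) = ∑ j, (w j - p j) * q j := by
      rw [hDev (w - p)]
      apply Finset.sum_congr rfl
      intro j _
      have : (w - p) j = w j - p j := rfl
      rw [this]
    rw [← hD, h2] at h1
    have h3 : ∑ j, (w j - p j) * q j = ∑ j, q j * w j - ∑ j, x j := by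
      rw [← Finset.sum_sub_distrib]
      apply Finset.sum_congr rfl
      intro j _
      rw [← hqp j]; ring
    rw [h3] at h1
    linarith
  -- value of starC u at q
  have hstar_u_q : starC u q = ∑ j, x j - u p := by
    rw [starC]
    apply le_antisymm
    · apply ciSup_le
      intro w
      exact htan w
    · have hb : BddAbove (Set.range fun w : En n => ∑ j, q j * w j - u w) :=
        ⟨∑ j, x j - u p, by rintro a ⟨w, rfl⟩; exact htan w⟩
      have := le_ciSup hb p
      have heq : ∑ j, q j * p j - u p = ∑ j, x j - u p := by
        have : ∑ j, q j * p j = ∑ j, x j := Finset.sum_congr rfl (fun j _ => hqp j)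
        rw [this]
      rw [heq] at this
      exact this
  -- value of starC (expComp u) at x
  have hstar1 : starC (expComp u) x = A := by
    have hexp : expComp u = fun y => u (Phi y) := rfl
    rw [starC, hexp]
    apply le_antisymm
    · apply ciSup_le
      intro y
      have := hy₀ y
      simp only [hA]
      linarith
    · have hb : BddAbove (Set.range fun y : En n => ∑ j, x j * y j - u (Phi y)) :=
        ⟨A, by
          rintro a ⟨y, rfl⟩
          have := hy₀ y
          simp only [hA]
          linarith⟩
      have := le_ciSup hb y₀
      simp only [hA] at *
      linarith
  -- value of starC (expComp (starC u)) at x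
  set B2 : ℝ := ∑ j, x j * Real.log (x j) - ∑ j, x j - A with hB2
  have hub : ∀ z : En n, ∑ j, x j * z j - starC u (Phi z) ≤ B2 := by
    intro z
    have hlow : ∑ j, (Phi z) j * p j - u p ≤ starC u (Phi z) := by
      rw [starC]
      exact le_ciSup (aux_bddAbove hu (Phi z)) p
    have hterm : ∀ j, x j * z j - (Phi z) j * p j ≤
        x j * Real.log (x j) - x j - x j * y₀ j := by
      intro j
      have h1 := aux_l2 (hx j) (z j + y₀ j)
      have h2 : Real.exp (z j + y₀ j) = (Phi z) j * p j := by
        rw [Real.exp_add]; rfl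
      rw [h2] at h1
      nlinarith [h1]
    have hsum : ∑ j, (x j * z j - (Phi z) j * p j) ≤
        ∑ j, (x j * Real.log (x j) - x j - x j * y₀ j) :=
      Finset.sum_le_sum (fun j _ => hterm j)
    have e1 : ∑ j, (x j * z j - (Phi z) j * p j)
        = ∑ j, x j * z j - ∑ j, (Phi z) j * p j := Finset.sum_sub_distrib _ _
    have e2 : ∑ j, (x j * Real.log (x j) - x j - x j * y₀ j)
        = ∑ j, x j * Real.log (x j) - ∑ j, x j - ∑ j, x j * y₀ j := by
      rw [← Finset.sum_sub_distrib, ← Finset.sum_sub_distrib]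
    rw [e1, e2] at hsum
    simp only [hB2, hA]
    linarith
  have hstar2 : starC (expComp (starC u)) x = B2 := by
    have hexp : expComp (starC u) = fun z => starC u (Phi z) := rfl
    rw [starC, hexp]
    apply le_antisymm
    · exact ciSup_le hub
    · set z₀ : En n := WithLp.toLp 2 fun j => Real.log (x j) - y₀ j with hz₀
      have hPz₀ : Phi z₀ = q := by
        ext j
        have : Phi z₀ j = Real.exp (Real.log (x j) - y₀ j) := rfl
        rw [this, Real.exp_sub, Real.exp_log (hx j)]
        have hqj : q j = x j / p j := by
          rw [eq_div_iff (ne_of_gt (hppos j))]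
          exact hqp j
        rw [hqj]
        rfl
      have hb : BddAbove (Set.range fun z : En n => ∑ j, x j * z j - starC u (Phi z)) :=
        ⟨B2, by rintro a ⟨z, rfl⟩; exact hub z⟩
      have hle := le_ciSup hb z₀
      have hval : ∑ j, x j * z₀ j - starC u (Phi z₀) = B2 := by
        rw [hPz₀, hstar_u_q]
        have : ∑ j, x j * z₀ j = ∑ j, x j * Real.log (x j) - ∑ j, x j * y₀ j := by
          rw [← Finset.sum_sub_distrib]
          apply Finset.sum_congr rfl
          intro j _
          simp only [hz₀, PiLp.toLp_apply]
          ring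
        rw [this]
        simp only [hB2, hA]
        ring
      rw [hval] at hle
      exact hle
  rw [hstar1, hstar2, hB2]
  rw [Finset.sum_sub_distrib]
  ring
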